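/- arXiv:2409.16634 — 3 statements merged into one kernel-verified Lean document; each statement's English description precedes it below -/
import Mathlib

section
/- Let U be a unitary operator and δ a bounded operator on a finite-dimensional Hilbert space with r‖δ‖ < 1 for a positive integer r. Then ‖(U+δ)^r − U^r − (∑_{k=0}^{r−1} U^k δ U^{−k}) U^{r−1}‖ ≤ (e/2)·r²‖δ‖², where ‖·‖ is the operator norm. -/
open Matrix Finset
open scoped Matrix.Norms.L2Operator

private lemma unitary_norm_le' {d : ℕ} (U : Matrix (Fin d) (Fin d) ℂ)
    (hU : U ∈ Matrix.unitaryGroup (Fin d) ℂ) : ‖U‖ ≤ 1 := by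
  have h1 : ‖(1 : Matrix (Fin d) (Fin d) ℂ)‖ ≤ 1 := by
    rw [Matrix.cstar_norm_def, _root_.map_one]
    exact ContinuousLinearMap.norm_id_le
  have h2 : ‖U‖ * ‖U‖ ≤ 1 := by
    rw [← Matrix.l2_opNorm_conjTranspose_mul_self]
    have := hU.1
    rw [Matrix.star_eq_conjTranspose] at this
    rw [this]; exact h1
  nlinarith [norm_nonneg U]

private lemma unitary_pow_norm_le' {d : ℕ} (U : Matrix (Fin d) (Fin d) ℂ)
    (hU : U ∈ Matrix.unitaryGroup (Fin d) ℂ) (k : ℕ) : ‖U ^ k‖ ≤ 1 :=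
  unitary_norm_le' _ (pow_mem hU k)

private lemma key_induction' {d : ℕ} (U δ : Matrix (Fin d) (Fin d) ℂ)
    (hU : U ∈ Matrix.unitaryGroup (Fin d) ℂ) (m : ℕ) :
    ‖(U + δ) ^ m - U ^ m - ∑ k ∈ Finset.range m, U ^ k * δ * U ^ (m - 1 - k)‖ ≤
      ‖δ‖ ^ 2 * ((m : ℝ) * ((m : ℝ) - 1) / 2) * (1 + ‖δ‖) ^ (m - 1) := by
  have hU1 : ‖U‖ ≤ 1 := unitary_norm_le' U hU
  set x := ‖δ‖ with hx
  clear_value x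
  have hx0 : 0 ≤ x := hx ▸ norm_nonneg δ
  induction m with
  | zero => simp
  | succ m ih =>
    have hmm : (0 : ℝ) ≤ (m : ℝ) * ((m : ℝ) - 1) := by
      rcases Nat.eq_zero_or_pos m with hm | hm
      · subst hm; norm_num
      · have : (1 : ℝ) ≤ (m : ℝ) := by exact_mod_cast hm
        nlinarith
    have hc : (0 : ℝ) ≤ x ^ 2 * ((m : ℝ) * ((m : ℝ) - 1) / 2) * (1 + x) ^ (m - 1) :=
      mul_nonneg (mul_nonneg (sq_nonneg x) (by linarith))
        (pow_nonneg (by linarith) _)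
    have hT : (∑ k ∈ Finset.range (m + 1), U ^ k * δ * U ^ (m + 1 - 1 - k)) =
        (∑ k ∈ Finset.range m, U ^ k * δ * U ^ (m - 1 - k)) * U + U ^ m * δ := by
      rw [Finset.sum_range_succ, Finset.sum_mul]
      congr 1
      · apply Finset.sum_congr rfl
        intro k hk
        rw [Finset.mem_range] at hk
        rw [mul_assoc (U ^ k * δ), ← pow_succ]
        congr 2
        omega
      · simp
    have hE : (U + δ) ^ (m + 1) - U ^ (m + 1) -
        ∑ k ∈ Finset.range (m + 1), U ^ k * δ * U ^ (m + 1 - 1 - k) =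
        ((U + δ) ^ m - U ^ m - ∑ k ∈ Finset.range m, U ^ k * δ * U ^ (m - 1 - k)) * (U + δ)
          + (∑ k ∈ Finset.range m, U ^ k * δ * U ^ (m - 1 - k)) * δ := by
      rw [hT, pow_succ, pow_succ]
      noncomm_ring
    have hTn : ‖∑ k ∈ Finset.range m, U ^ k * δ * U ^ (m - 1 - k)‖ ≤ (m : ℝ) * x := by
      calc ‖∑ k ∈ Finset.range m, U ^ k * δ * U ^ (m - 1 - k)‖
          ≤ ∑ k ∈ Finset.range m, ‖U ^ k * δ * U ^ (m - 1 - k)‖ := norm_sum_le _ _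
        _ ≤ ∑ _k ∈ Finset.range m, x := by
            apply Finset.sum_le_sum
            intro k _
            have h1 := unitary_pow_norm_le' U hU k
            have h2 := unitary_pow_norm_le' U hU (m - 1 - k)
            calc ‖U ^ k * δ * U ^ (m - 1 - k)‖ ≤ ‖U ^ k * δ‖ * ‖U ^ (m - 1 - k)‖ :=
                  norm_mul_le _ _
              _ ≤ ‖U ^ k‖ * ‖δ‖ * ‖U ^ (m - 1 - k)‖ := by
                  gcongr; exact norm_mul_le _ _
              _ ≤ 1 * x * 1 :=
                  mul_le_mul (mul_le_mul h1 hx.ge (norm_nonneg δ) zero_le_one) h2 (norm_nonneg _)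
                    (by linarith)
              _ = x := by ring
        _ = (m : ℝ) * x := by simp [mul_comm]
    have hUδ : ‖U + δ‖ ≤ 1 + x := le_trans (norm_add_le _ _) (by rw [hx]; gcongr)
    have step : ‖(U + δ) ^ (m + 1) - U ^ (m + 1) -
        ∑ k ∈ Finset.range (m + 1), U ^ k * δ * U ^ (m + 1 - 1 - k)‖ ≤
        (x ^ 2 * ((m : ℝ) * ((m : ℝ) - 1) / 2) * (1 + x) ^ (m - 1)) * (1 + x)
          + ((m : ℝ) * x) * x := by
      rw [hE]
      refine le_trans (norm_add_le _ _) (add_le_add ?_ ?_)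
      · exact le_trans (norm_mul_le _ _) (mul_le_mul ih hUδ (norm_nonneg _) hc)
      · exact le_trans (norm_mul_le _ _) (mul_le_mul hTn hx.ge (norm_nonneg δ) (by positivity))
    refine le_trans step ?_
    have hcast : ((m + 1 : ℕ) : ℝ) = (m : ℝ) + 1 := by push_cast; ring
    rw [Nat.add_sub_cancel, hcast]
    rcases Nat.eq_zero_or_pos m with hm | hm
    · subst hm; norm_num
    · have hpow : (1 + x) ^ (m - 1) * (1 + x) = (1 + x) ^ m := by
        rw [← pow_succ]; congr 1; omega
      have honele : (1 : ℝ) ≤ (1 + x) ^ m := one_le_pow₀ (by linarith)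
      have hnn : (0 : ℝ) ≤ x ^ 2 * (m : ℝ) := by positivity
      rw [mul_assoc, hpow]
      nlinarith [mul_nonneg hnn (sub_nonneg.2 honele)]

/-- For a unitary `U` and bounded operator `δ` with `r‖δ‖ < 1`, the remainder of
`(U+δ)^r` after subtracting `U^r` and the first-order error term is bounded by
`(e/2) r² ‖δ‖²` in the spectral norm. -/
theorem trotter_remainder_bound {d : ℕ} (U δ : Matrix (Fin d) (Fin d) ℂ)
    (hU : U ∈ Matrix.unitaryGroup (Fin d) ℂ)
    (r : ℕ) (hr : 0 < r) (h : (r : ℝ) * ‖δ‖ < 1) :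
    ‖(U + δ) ^ r - U ^ r -
        (∑ k ∈ Finset.range r, U ^ k * δ * U⁻¹ ^ k) * U ^ (r - 1)‖ ≤
      Real.exp 1 / 2 * (r : ℝ) ^ 2 * ‖δ‖ ^ 2 := by
  set x := ‖δ‖ with hx
  clear_value x
  have hx0 : 0 ≤ x := hx ▸ norm_nonneg δ
  have hdet : IsUnit U.det := by
    have h1 := congrArg Matrix.det hU.1
    rw [Matrix.det_mul, Matrix.det_one] at h1
    exact IsUnit.of_mul_eq_one _ (by rw [mul_comm]; exact h1)
  have hsum : (∑ k ∈ Finset.range r, U ^ k * δ * U⁻¹ ^ k) * U ^ (r - 1) =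
      ∑ k ∈ Finset.range r, U ^ k * δ * U ^ (r - 1 - k) := by
    rw [Finset.sum_mul]
    apply Finset.sum_congr rfl
    intro k hk
    rw [Finset.mem_range] at hk
    have hcancel : (U ^ k)⁻¹ * U ^ (r - 1) = U ^ (r - 1 - k) := by
      have e : U ^ (r - 1) = U ^ k * U ^ (r - 1 - k) := by
        rw [← pow_add]; congr 1; omega
      rw [e, ← mul_assoc,
        Matrix.nonsing_inv_mul _ (by simpa [Matrix.det_pow] using hdet.pow k), one_mul]
    rw [Matrix.inv_pow', mul_assoc, hcancel]
  rw [hsum]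
  refine le_trans (key_induction' U δ hU r) ?_
  rw [← hx]
  have hexp1 : (1 + x) ^ (r - 1) ≤ Real.exp 1 := by
    calc (1 + x) ^ (r - 1) ≤ (1 + x) ^ r :=
          pow_le_pow_right₀ (by linarith) (Nat.sub_le r 1)
      _ ≤ Real.exp x ^ r := by
          gcongr <;> linarith [Real.add_one_le_exp x]
      _ = Real.exp ((r : ℝ) * x) := by rw [← Real.exp_nat_mul]
      _ ≤ Real.exp 1 := Real.exp_le_exp.2 h.le
  have hr1 : (1 : ℝ) ≤ (r : ℝ) := by exact_mod_cast hr
  have hA : (0 : ℝ) ≤ x ^ 2 * ((r : ℝ) * ((r : ℝ) - 1) / 2) :=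
    mul_nonneg (sq_nonneg x) (by nlinarith)
  calc x ^ 2 * ((r : ℝ) * ((r : ℝ) - 1) / 2) * (1 + x) ^ (r - 1)
      ≤ x ^ 2 * ((r : ℝ) * ((r : ℝ) - 1) / 2) * Real.exp 1 :=
        mul_le_mul_of_nonneg_left hexp1 hA
    _ ≤ Real.exp 1 / 2 * (r : ℝ) ^ 2 * x ^ 2 := by
        nlinarith [mul_nonneg (mul_nonneg (Real.exp_pos 1).le (sq_nonneg x)) (by linarith : (0:ℝ) ≤ (r:ℝ)),
          Real.exp_pos 1, sq_nonneg x]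
end

section
/- Let U be a unitary and δ a bounded operator with r‖δ‖ < 1. Then ‖(U+δ)^r − U^r‖ ≤ ‖∑_{k=0}^{r−1} U^k δ U^{−k}‖ + (e/2)·r²‖δ‖². -/
open Matrix Finset
open scoped Matrix.Norms.L2Operator


private lemma trotter_aux_exp {t : ℝ} (ht0 : 0 ≤ t) (ht1 : t < 1) :
    Real.exp t - 1 - t ≤ 3 / 4 * t ^ 2 := by
  have hb := Real.exp_bound (x := t) (by rw [abs_of_nonneg ht0]; linarith) (n := 2) (by norm_num)
  rw [abs_of_nonneg ht0] at hb
  norm_num [Finset.sum_range_succ] at hb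
  have h2 := (abs_le.mp hb).2
  nlinarith [h2]

private lemma trotter_aux_scalar {x : ℝ} {r : ℕ} (hx0 : 0 ≤ x) (h : (r : ℝ) * x < 1) :
    (1 + x) ^ r - 1 - (r : ℝ) * x ≤ Real.exp 1 / 2 * (r : ℝ) ^ 2 * x ^ 2 := by
  have ht0 : 0 ≤ (r : ℝ) * x := by positivity
  have hexp1 : (1 + x) ^ r ≤ Real.exp ((r : ℝ) * x) := by
    calc (1 + x) ^ r ≤ (Real.exp x) ^ r := by
          apply pow_le_pow_left₀ (by linarith)
          linarith [Real.add_one_le_exp x]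
      _ = Real.exp ((r : ℝ) * x) := by rw [← Real.exp_nat_mul]
  have hexp2 := trotter_aux_exp ht0 h
  have he : (2 : ℝ) ≤ Real.exp 1 := by
    have := Real.add_one_le_exp (1 : ℝ); linarith
  nlinarith [sq_nonneg ((r : ℝ) * x), hexp1, hexp2]

/-- For a unitary `U` and bounded operator `δ` with `r‖δ‖ < 1`, the total Trotter
error `‖(U+δ)^r − U^r‖` is bounded by the norm of the first-order accumulated error
plus `(e/2) r² ‖δ‖²`. -/
theorem trotter_total_error_bound {d : ℕ} (U δ : Matrix (Fin d) (Fin d) ℂ)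
    (hU : U ∈ Matrix.unitaryGroup (Fin d) ℂ)
    (r : ℕ) (hr : 0 < r) (h : (r : ℝ) * ‖δ‖ < 1) :
    ‖(U + δ) ^ r - U ^ r‖ ≤
      ‖∑ k ∈ Finset.range r, U ^ k * δ * U⁻¹ ^ k‖ +
        Real.exp 1 / 2 * (r : ℝ) ^ 2 * ‖δ‖ ^ 2 := by
  set x : ℝ := ‖δ‖ with hxdef
  have hx0 : 0 ≤ x := norm_nonneg _
  have hsUU : star U * U = 1 := hU.1
  have hUsU : U * star U = 1 := hU.2
  -- ‖1‖ ≤ 1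
  have hone : ‖(1 : Matrix (Fin d) (Fin d) ℂ)‖ ≤ 1 := by
    have h1 : ‖star (1 : Matrix (Fin d) (Fin d) ℂ) * 1‖ = ‖(1 : Matrix (Fin d) (Fin d) ℂ)‖ *
        ‖(1 : Matrix (Fin d) (Fin d) ℂ)‖ := CStarRing.norm_star_mul_self
    rw [star_one, one_mul] at h1
    nlinarith [norm_nonneg (1 : Matrix (Fin d) (Fin d) ℂ)]
  -- ‖U‖ ≤ 1
  have hU1 : ‖U‖ ≤ 1 := by
    have h1 : ‖star U * U‖ = ‖U‖ * ‖U‖ := CStarRing.norm_star_mul_self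
    rw [hsUU] at h1
    nlinarith [norm_nonneg U]
  have hUn : ∀ n : ℕ, ‖U ^ n‖ ≤ 1 := by
    intro n
    induction n with
    | zero => simpa using hone
    | succ n ih =>
      calc ‖U ^ (n + 1)‖ = ‖U ^ n * U‖ := by rw [pow_succ]
        _ ≤ ‖U ^ n‖ * ‖U‖ := norm_mul_le _ _
        _ ≤ 1 := by nlinarith [norm_nonneg (U ^ n)]
  set A := U + δ with hAdef
  have hA : ‖A‖ ≤ 1 + x := le_trans (norm_add_le _ _) (by linarith)
  have hAn : ∀ n : ℕ, ‖A ^ n‖ ≤ (1 + x) ^ n := by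
    intro n
    induction n with
    | zero => simpa using hone
    | succ n ih =>
      calc ‖A ^ (n + 1)‖ = ‖A ^ n * A‖ := by rw [pow_succ]
        _ ≤ ‖A ^ n‖ * ‖A‖ := norm_mul_le _ _
        _ ≤ (1 + x) ^ n * (1 + x) := by
            have := norm_nonneg (A ^ n)
            nlinarith [pow_nonneg (by linarith : (0:ℝ) ≤ 1 + x) n]
        _ = (1 + x) ^ (n + 1) := (pow_succ _ _).symm
  -- first-order difference bound
  have key1 : ∀ n : ℕ, ‖A ^ n - U ^ n‖ ≤ (1 + x) ^ n - 1 := by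
    intro n
    induction n with
    | zero => simp
    | succ n ih =>
      have hid : A ^ (n + 1) - U ^ (n + 1) = (A ^ n - U ^ n) * U + A ^ n * δ := by
        rw [pow_succ, pow_succ, hAdef]
        noncomm_ring
      calc ‖A ^ (n + 1) - U ^ (n + 1)‖
          ≤ ‖(A ^ n - U ^ n) * U‖ + ‖A ^ n * δ‖ := by rw [hid]; exact norm_add_le _ _
        _ ≤ ‖A ^ n - U ^ n‖ * ‖U‖ + ‖A ^ n‖ * x := by
            gcongr <;> [exact norm_mul_le _ _; exact norm_mul_le _ _]
        _ ≤ (1 + x) ^ (n + 1) - 1 := by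
            have h1 := hAn n
            have h2 := norm_nonneg (A ^ n - U ^ n)
            have h3 := norm_nonneg (A ^ n)
            rw [pow_succ]
            nlinarith [pow_nonneg (by linarith : (0:ℝ) ≤ 1 + x) n]
  -- the first-order accumulated error
  set E : ℕ → Matrix (Fin d) (Fin d) ℂ :=
    fun n => ∑ j ∈ Finset.range n, U ^ j * δ * U ^ (n - 1 - j) with hEdef
  have hEsucc : ∀ n : ℕ, E (n + 1) = E n * U + U ^ n * δ := by
    intro n
    rw [hEdef]
    simp only []
    rw [Finset.sum_range_succ, Finset.sum_mul]
    congr 1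
    · apply Finset.sum_congr rfl
      intro j hj
      have hj' : j < n := Finset.mem_range.mp hj
      have : n + 1 - 1 - j = (n - 1 - j) + 1 := by omega
      rw [this, pow_succ, ← mul_assoc]
    · simp
  have key2 : ∀ n : ℕ, ‖A ^ n - U ^ n - E n‖ ≤ (1 + x) ^ n - 1 - n * x := by
    intro n
    induction n with
    | zero => simp [hEdef]
    | succ n ih =>
      push_cast
      have hid : A ^ (n + 1) - U ^ (n + 1) - E (n + 1) =
          (A ^ n - U ^ n - E n) * U + (A ^ n - U ^ n) * δ := by
        rw [hEsucc n, pow_succ, pow_succ, hAdef]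
        noncomm_ring
      calc ‖A ^ (n + 1) - U ^ (n + 1) - E (n + 1)‖
          ≤ ‖(A ^ n - U ^ n - E n) * U‖ + ‖(A ^ n - U ^ n) * δ‖ := by
            rw [hid]; exact norm_add_le _ _
        _ ≤ ‖A ^ n - U ^ n - E n‖ * ‖U‖ + ‖A ^ n - U ^ n‖ * x := by
            gcongr <;> [exact norm_mul_le _ _; exact norm_mul_le _ _]
        _ ≤ (1 + x) ^ (n + 1) - 1 - ((n : ℝ) + 1) * x := by
            have h1 := key1 n
            have h2 := norm_nonneg (A ^ n - U ^ n - E n)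
            have h3 := norm_nonneg (A ^ n - U ^ n)
            rw [pow_succ]
            nlinarith [pow_nonneg (by linarith : (0:ℝ) ≤ 1 + x) n]
  -- rewrite E r in terms of the sum in the statement
  have hUinv : U⁻¹ = star U := Matrix.inv_eq_left_inv hsUU
  have hinvpow : ∀ j : ℕ, U⁻¹ ^ j * U ^ j = 1 := by
    intro j
    have hc : Commute U⁻¹ U := by
      unfold Commute SemiconjBy
      rw [hUinv, hsUU, hUsU]
    rw [← hc.mul_pow, hUinv, hsUU, one_pow]
  have hEr : E r = (∑ k ∈ Finset.range r, U ^ k * δ * U⁻¹ ^ k) * U ^ (r - 1) := by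
    rw [hEdef, Finset.sum_mul]
    apply Finset.sum_congr rfl
    intro j hj
    have hj' : j < r := Finset.mem_range.mp hj
    have hsplit : U ^ (r - 1) = U ^ j * U ^ (r - 1 - j) := by
      rw [← pow_add]
      congr 1
      omega
    conv_rhs => rw [hsplit]
    rw [mul_assoc (U ^ j * δ) (U⁻¹ ^ j), ← mul_assoc (U⁻¹ ^ j), hinvpow j, one_mul]
  set S := ∑ k ∈ Finset.range r, U ^ k * δ * U⁻¹ ^ k with hSdef
  have hES : ‖E r‖ ≤ ‖S‖ := by
    rw [hEr]
    calc ‖S * U ^ (r - 1)‖ ≤ ‖S‖ * ‖U ^ (r - 1)‖ := norm_mul_le _ _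
      _ ≤ ‖S‖ := by nlinarith [hUn (r - 1), norm_nonneg S]
  have hscalar := trotter_aux_scalar hx0 h
  -- assemble
  calc ‖A ^ r - U ^ r‖ = ‖(A ^ r - U ^ r - E r) + E r‖ := by rw [sub_add_cancel]
    _ ≤ ‖A ^ r - U ^ r - E r‖ + ‖E r‖ := norm_add_le _ _
    _ ≤ ((1 + x) ^ r - 1 - r * x) + ‖S‖ := by
        have := key2 r
        linarith
    _ ≤ ‖S‖ + Real.exp 1 / 2 * (r : ℝ) ^ 2 * x ^ 2 := by linarith
end

section
/- Let H be Hermitian, t ∈ ℝ, τ > 0, r = t/τ a positive integer, δ_⊥ ∈ H_⊥ a matrix all of whose nonzero matrix elements ⟨i|δ_⊥|j⟩ occur at pairs with λ_i ≠ λ_j and e^{−iτ(λ_i−λ_j)} ≠ 1. Then ‖∑_{k=0}^{r−1} e^{−ikτH} δ_⊥ e^{ikτH} − (i/τ)(e^{−iHt} ad_H^{−1}(δ_⊥) e^{iHt} − ad_H^{−1}(δ_⊥))‖ ≤ C·‖δ_⊥‖ for a constant C independent of r (depending only on the spectral gaps of H and an upper bound on τ). -/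
open Matrix Finset
open scoped Matrix.Norms.L2Operator

/-- The linear functional `δ ↦ ⟨u, δ w⟩` on matrices. -/
noncomputable def matrixEntryFunctional {d : ℕ} (u w : Fin d → ℂ) :
    Matrix (Fin d) (Fin d) ℂ →ₗ[ℂ] ℂ where
  toFun δ := star u ⬝ᵥ δ.mulVec w
  map_add' x y := by simp [Matrix.add_mulVec, dotProduct_add]
  map_smul' m x := by simp [Matrix.smul_mulVec, dotProduct_smul]

/-- For Hermitian `H` with orthonormal eigenbasis `v`, eigenvalues `μ`, and a fixed
step size `τ > 0` non-resonant with the spectral gaps, there is a constant `C`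
independent of the number of steps `r` such that, for every `δ_⊥` supported on pairs
with distinct eigenvalues, the accumulated error differs from
`(i/τ)(e^{−iHt} ad_H^{−1}(δ_⊥) e^{iHt} − ad_H^{−1}(δ_⊥))` (with `t = rτ`) by at most
`C‖δ_⊥‖` in spectral norm. -/
theorem accumulated_error_near_rotation {d : ℕ}
    (H : Matrix (Fin d) (Fin d) ℂ) (hH : H.IsHermitian)
    (v : Fin d → (Fin d → ℂ)) (μ : Fin d → ℝ)
    (horth : ∀ i j, star (v i) ⬝ᵥ v j = if i = j then 1 else 0)
    (heig : ∀ i, H.mulVec (v i) = (μ i : ℂ) • v i)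
    (τ : ℝ) (hτ : 0 < τ)
    (hres : ∀ i j, μ i ≠ μ j →
      Complex.exp (-(Complex.I * (τ : ℂ) * ((μ i : ℂ) - (μ j : ℂ)))) ≠ 1) :
    ∃ C > (0 : ℝ), ∀ r : ℕ, 0 < r →
      ∀ δ : Matrix (Fin d) (Fin d) ℂ,
        (∀ i j, μ i = μ j → star (v i) ⬝ᵥ δ.mulVec (v j) = 0) →
        ‖(∑ k ∈ Finset.range r,
            NormedSpace.exp ((-(Complex.I * (k : ℂ) * (τ : ℂ))) • H) * δ *
              NormedSpace.exp ((Complex.I * (k : ℂ) * (τ : ℂ)) • H)) -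
          (Complex.I / (τ : ℂ)) •
            (NormedSpace.exp ((-(Complex.I * ((r : ℂ) * (τ : ℂ)))) • H) *
                (∑ p ∈ Finset.univ.filter (fun p : Fin d × Fin d => μ p.1 ≠ μ p.2),
                  (((μ p.1 : ℂ) - (μ p.2 : ℂ))⁻¹ *
                    (star (v p.1) ⬝ᵥ δ.mulVec (v p.2))) •
                      vecMulVec (v p.1) (star (v p.2))) *
                NormedSpace.exp ((Complex.I * ((r : ℂ) * (τ : ℂ))) • H) -
              ∑ p ∈ Finset.univ.filter (fun p : Fin d × Fin d => μ p.1 ≠ μ p.2),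
                (((μ p.1 : ℂ) - (μ p.2 : ℂ))⁻¹ *
                  (star (v p.1) ⬝ᵥ δ.mulVec (v p.2))) •
                    vecMulVec (v p.1) (star (v p.2)))‖ ≤ C * ‖δ‖ := by
  classical
  -- basic setup: the unitary of eigenvectors
  set U : Matrix (Fin d) (Fin d) ℂ := Matrix.of fun a i => v i a with hUdef
  have h1 : Uᴴ * U = 1 := by
    ext i j
    simpa [hUdef, Matrix.mul_apply, Matrix.one_apply, dotProduct, mul_comm] using horth i j
  have h2 : U * Uᴴ = 1 := mul_eq_one_comm.mp h1
  have hUinv : U⁻¹ = Uᴴ := Matrix.inv_eq_right_inv h2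
  have hUunit : IsUnit U := ⟨⟨U, Uᴴ, h2, h1⟩, rfl⟩
  have hHU : H * U = U * Matrix.diagonal (fun i => (μ i : ℂ)) := by
    ext a j
    have := congrFun (heig j) a
    simpa [hUdef, Matrix.mul_apply, Matrix.mulVec, Matrix.diagonal, dotProduct,
      mul_comm] using this
  have hHeq : H = U * Matrix.diagonal (fun i => (μ i : ℂ)) * Uᴴ := by
    calc H = H * (U * Uᴴ) := by rw [h2, mul_one]
    _ = (H * U) * Uᴴ := by rw [mul_assoc]
    _ = U * Matrix.diagonal (fun i => (μ i : ℂ)) * Uᴴ := by rw [hHU]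
  -- the exponential acts diagonally
  have hexp : ∀ c : ℂ, NormedSpace.exp (c • H) =
      U * Matrix.diagonal (fun i => Complex.exp (c * μ i)) * Uᴴ := by
    intro c
    have hsmul : c • H = U * Matrix.diagonal (fun i => c * (μ i : ℂ)) * Uᴴ := by
      rw [hHeq, ← Matrix.smul_mul, ← Matrix.mul_smul, ← Matrix.diagonal_smul]
      simp [Pi.smul_def, smul_eq_mul]
    rw [hsmul, ← hUinv, Matrix.exp_conj U _ hUunit, Matrix.exp_diagonal, hUinv]
    congr 2
    rw [Pi.exp_def]
    funext i
    rw [← Complex.exp_eq_exp_ℂ]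
  -- rank-one pieces as conjugated standard basis matrices
  have hE : ∀ i j, vecMulVec (v i) (star (v j)) = U * Matrix.single i j 1 * Uᴴ := by
    intro i j
    ext a b
    simp [hUdef, Matrix.mul_apply, Matrix.vecMulVec_apply, Matrix.single,
      Matrix.conjTranspose_apply, ite_and, Finset.sum_ite_eq, Finset.mul_sum, mul_comm]
  -- conjugation of rank-one pieces by exponentials
  have hconj : ∀ (a b : ℂ) (i j : Fin d),
      NormedSpace.exp (a • H) * vecMulVec (v i) (star (v j)) * NormedSpace.exp (b • H) =
        Complex.exp (a * μ i + b * μ j) • vecMulVec (v i) (star (v j)) := by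
    intro a b i j
    rw [hexp, hexp, hE]
    have hmid : Matrix.diagonal (fun k => Complex.exp (a * μ k)) *
        Matrix.single i j (1:ℂ) * Matrix.diagonal (fun k => Complex.exp (b * μ k)) =
        Complex.exp (a * μ i + b * μ j) • Matrix.single i j 1 := by
      ext x y
      simp only [Matrix.diagonal_mul, Matrix.mul_diagonal, Matrix.smul_apply, smul_eq_mul,
        Matrix.single, Matrix.of_apply]
      split_ifs with h
      · obtain ⟨rfl, rfl⟩ := h
        rw [Complex.exp_add]; ring
      · ring
    calc (U * Matrix.diagonal (fun k => Complex.exp (a * μ k)) * Uᴴ) *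
          (U * Matrix.single i j 1 * Uᴴ) *
          (U * Matrix.diagonal (fun k => Complex.exp (b * μ k)) * Uᴴ)
        = U * (Matrix.diagonal (fun k => Complex.exp (a * μ k)) * (Uᴴ * U) *
            Matrix.single i j 1 * ((Uᴴ * U) *
            Matrix.diagonal (fun k => Complex.exp (b * μ k)))) * Uᴴ := by
          simp only [Matrix.mul_assoc]
      _ = U * (Matrix.diagonal (fun k => Complex.exp (a * μ k)) *
            Matrix.single i j 1 *
            Matrix.diagonal (fun k => Complex.exp (b * μ k))) * Uᴴ := by
          rw [h1]; simp [Matrix.mul_assoc]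
      _ = U * (Complex.exp (a * μ i + b * μ j) • Matrix.single i j 1) * Uᴴ := by
          rw [hmid]
      _ = Complex.exp (a * μ i + b * μ j) • (U * Matrix.single i j 1 * Uᴴ) := by
          rw [Matrix.mul_smul, Matrix.smul_mul]
  -- notation
  set S : Finset (Fin d × Fin d) := Finset.univ.filter (fun p : Fin d × Fin d => μ p.1 ≠ μ p.2)
    with hSdef
  set z : Fin d × Fin d → ℂ :=
    fun p => Complex.exp (-(Complex.I * (τ : ℂ) * ((μ p.1 : ℂ) - (μ p.2 : ℂ)))) with hzdef
  set w : Fin d × Fin d → ℂ :=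
    fun p => (z p - 1)⁻¹ - Complex.I * (τ : ℂ)⁻¹ * ((μ p.1 : ℂ) - (μ p.2 : ℂ))⁻¹ with hwdef
  set K : Fin d × Fin d → ℝ :=
    fun p => ‖LinearMap.toContinuousLinearMap (matrixEntryFunctional (v p.1) (v p.2))‖
    with hKdef
  have hzk : ∀ (k : ℕ) (p : Fin d × Fin d),
      z p ^ k = Complex.exp (-(Complex.I * (k : ℂ) * (τ : ℂ) * ((μ p.1 : ℂ) - (μ p.2 : ℂ)))) := by
    intro k p
    rw [hzdef]
    simp only
    rw [← Complex.exp_nat_mul]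
    congr 1
    ring
  refine ⟨1 + ∑ p ∈ S, 2 * ‖w p‖ * ‖vecMulVec (v p.1) (star (v p.2))‖ * K p, ?_, ?_⟩
  · have : (0:ℝ) ≤ ∑ p ∈ S, 2 * ‖w p‖ * ‖vecMulVec (v p.1) (star (v p.2))‖ * K p :=
      Finset.sum_nonneg fun p _ => by positivity
    linarith
  intro r hr δ hδ
  set c : Fin d × Fin d → ℂ := fun p => star (v p.1) ⬝ᵥ δ.mulVec (v p.2) with hcdef
  -- decomposition of δ
  have hδsum : δ = ∑ p ∈ S, c p • vecMulVec (v p.1) (star (v p.2)) := by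
    have hδuniv : δ = ∑ p : Fin d × Fin d, c p • vecMulVec (v p.1) (star (v p.2)) := by
      have hΔ : ∀ i j, (Uᴴ * δ * U) i j = c (i, j) := by
        intro i j
        simp only [hUdef, hcdef, Matrix.mul_apply, Matrix.conjTranspose_apply, Matrix.of_apply,
          Matrix.mulVec, dotProduct, Pi.star_apply, Finset.sum_mul, Finset.mul_sum]
        rw [Finset.sum_comm]
        refine Finset.sum_congr rfl fun x _ => Finset.sum_congr rfl fun y _ => by ring
      have hdec : Uᴴ * δ * U = ∑ p : Fin d × Fin d, c p • Matrix.single p.1 p.2 1 := by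
        conv_lhs => rw [Matrix.matrix_eq_sum_single (Uᴴ * δ * U)]
        rw [← Finset.sum_product']
        refine Finset.sum_congr rfl fun p _ => ?_
        rw [hΔ p.1 p.2, Matrix.smul_single]
        simp
      have hrec : δ = U * (Uᴴ * δ * U) * Uᴴ := by
        calc δ = (U * Uᴴ) * δ * (U * Uᴴ) := by rw [h2]; simp
        _ = U * (Uᴴ * δ * U) * Uᴴ := by simp only [Matrix.mul_assoc]
      rw [hrec, hdec, Finset.mul_sum, Finset.sum_mul]
      refine Finset.sum_congr rfl fun p _ => ?_
      rw [hE, Matrix.mul_smul, Matrix.smul_mul]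
    rw [hδuniv]
    symm
    refine Finset.sum_subset (Finset.filter_subset _ _) fun p _ hp => ?_
    have hpe : μ p.1 = μ p.2 := by
      by_contra hne
      exact hp (Finset.mem_filter.mpr ⟨Finset.mem_univ _, hne⟩)
    rw [hcdef]
    simp [hδ p.1 p.2 hpe]
  -- the k-th summand
  have hterm1 : ∀ k : ℕ,
      NormedSpace.exp ((-(Complex.I * (k : ℂ) * (τ : ℂ))) • H) * δ *
        NormedSpace.exp ((Complex.I * (k : ℂ) * (τ : ℂ)) • H) =
      ∑ p ∈ S, (c p * z p ^ k) • vecMulVec (v p.1) (star (v p.2)) := by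
    intro k
    conv_lhs => rw [hδsum]
    rw [Finset.mul_sum, Finset.sum_mul]
    refine Finset.sum_congr rfl fun p _ => ?_
    have hsc : Complex.exp ((-(Complex.I * (k : ℂ) * (τ : ℂ))) * (μ p.1 : ℂ) +
        (Complex.I * (k : ℂ) * (τ : ℂ)) * (μ p.2 : ℂ)) = z p ^ k := by
      rw [hzk]
      congr 1
      ring
    rw [mul_smul_comm, smul_mul_assoc, hconj, smul_smul, hsc]
  -- conjugation of the pseudoinverse term
  have hterm2 :
      NormedSpace.exp ((-(Complex.I * ((r : ℂ) * (τ : ℂ)))) • H) *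
        (∑ p ∈ S, (((μ p.1 : ℂ) - (μ p.2 : ℂ))⁻¹ * c p) • vecMulVec (v p.1) (star (v p.2))) *
        NormedSpace.exp ((Complex.I * ((r : ℂ) * (τ : ℂ))) • H) =
      ∑ p ∈ S, (((μ p.1 : ℂ) - (μ p.2 : ℂ))⁻¹ * c p * z p ^ r) •
        vecMulVec (v p.1) (star (v p.2)) := by
    rw [Finset.mul_sum, Finset.sum_mul]
    refine Finset.sum_congr rfl fun p _ => ?_
    have hsc : Complex.exp ((-(Complex.I * ((r : ℂ) * (τ : ℂ)))) * (μ p.1 : ℂ) +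
        (Complex.I * ((r : ℂ) * (τ : ℂ))) * (μ p.2 : ℂ)) = z p ^ r := by
      rw [hzk]
      congr 1
      ring
    rw [mul_smul_comm, smul_mul_assoc, hconj, smul_smul, hsc]
  -- assemble: the whole matrix is a combination of rank-one pieces
  have hmain :
      (∑ k ∈ Finset.range r,
        NormedSpace.exp ((-(Complex.I * (k : ℂ) * (τ : ℂ))) • H) * δ *
          NormedSpace.exp ((Complex.I * (k : ℂ) * (τ : ℂ)) • H)) -
      (Complex.I / (τ : ℂ)) •
        (NormedSpace.exp ((-(Complex.I * ((r : ℂ) * (τ : ℂ)))) • H) *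
            (∑ p ∈ S, (((μ p.1 : ℂ) - (μ p.2 : ℂ))⁻¹ * c p) •
              vecMulVec (v p.1) (star (v p.2))) *
            NormedSpace.exp ((Complex.I * ((r : ℂ) * (τ : ℂ))) • H) -
          ∑ p ∈ S, (((μ p.1 : ℂ) - (μ p.2 : ℂ))⁻¹ * c p) •
            vecMulVec (v p.1) (star (v p.2))) =
      ∑ p ∈ S,
        (c p * (∑ k ∈ Finset.range r, z p ^ k) -
          Complex.I / (τ : ℂ) * (((μ p.1 : ℂ) - (μ p.2 : ℂ))⁻¹ * c p * z p ^ r -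
            ((μ p.1 : ℂ) - (μ p.2 : ℂ))⁻¹ * c p)) • vecMulVec (v p.1) (star (v p.2)) := by
    rw [hterm2]
    simp only [hterm1]
    rw [Finset.sum_comm, ← Finset.sum_sub_distrib, Finset.smul_sum, ← Finset.sum_sub_distrib]
    refine Finset.sum_congr rfl fun p _ => ?_
    rw [← Finset.sum_smul, ← sub_smul, smul_smul, ← sub_smul, ← Finset.mul_sum]
  -- the coefficient bound
  have hcoeff : ∀ p ∈ S,
      ‖c p * (∑ k ∈ Finset.range r, z p ^ k) -
        Complex.I / (τ : ℂ) * (((μ p.1 : ℂ) - (μ p.2 : ℂ))⁻¹ * c p * z p ^ r -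
          ((μ p.1 : ℂ) - (μ p.2 : ℂ))⁻¹ * c p)‖ ≤ 2 * ‖w p‖ * (K p * ‖δ‖) := by
    intro p hp
    have hne : μ p.1 ≠ μ p.2 := (Finset.mem_filter.mp hp).2
    have hμ : ((μ p.1 : ℂ) - (μ p.2 : ℂ)) ≠ 0 := by
      rw [sub_ne_zero]
      exact_mod_cast hne
    have hz1 : z p ≠ 1 := hres _ _ hne
    have hτ0 : (τ : ℂ) ≠ 0 := by exact_mod_cast hτ.ne'
    have hz0 : z p - 1 ≠ 0 := sub_ne_zero.mpr hz1
    have hfact : c p * (∑ k ∈ Finset.range r, z p ^ k) -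
        Complex.I / (τ : ℂ) * (((μ p.1 : ℂ) - (μ p.2 : ℂ))⁻¹ * c p * z p ^ r -
          ((μ p.1 : ℂ) - (μ p.2 : ℂ))⁻¹ * c p) = c p * ((z p ^ r - 1) * w p) := by
      rw [geom_sum_eq hz1, hwdef]
      simp only
      field_simp
    rw [hfact]
    have habs : ‖z p‖ = 1 := by
      rw [hzdef]
      simp only [Complex.norm_exp]
      norm_num
    have hz2 : ‖z p ^ r - 1‖ ≤ 2 := by
      calc ‖z p ^ r - 1‖ ≤ ‖z p ^ r‖ + ‖(1:ℂ)‖ := norm_sub_le _ _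
      _ = 2 := by rw [norm_pow, habs]; norm_num
    have hc : ‖c p‖ ≤ K p * ‖δ‖ := by
      have hb := (LinearMap.toContinuousLinearMap
        (matrixEntryFunctional (v p.1) (v p.2))).le_opNorm δ
      simpa [hKdef, hcdef, matrixEntryFunctional, LinearMap.coe_toContinuousLinearMap'] using hb
    calc ‖c p * ((z p ^ r - 1) * w p)‖ = ‖c p‖ * (‖z p ^ r - 1‖ * ‖w p‖) := by
          rw [norm_mul, norm_mul]
      _ ≤ (K p * ‖δ‖) * (2 * ‖w p‖) := by
          have h0 : (0:ℝ) ≤ ‖w p‖ := norm_nonneg _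
          have h1' : ‖z p ^ r - 1‖ * ‖w p‖ ≤ 2 * ‖w p‖ :=
            mul_le_mul_of_nonneg_right hz2 h0
          exact mul_le_mul hc h1' (by positivity) (by positivity)
      _ = 2 * ‖w p‖ * (K p * ‖δ‖) := by ring
  rw [hmain]
  calc ‖∑ p ∈ S, (c p * (∑ k ∈ Finset.range r, z p ^ k) -
        Complex.I / (τ : ℂ) * (((μ p.1 : ℂ) - (μ p.2 : ℂ))⁻¹ * c p * z p ^ r -
          ((μ p.1 : ℂ) - (μ p.2 : ℂ))⁻¹ * c p)) • vecMulVec (v p.1) (star (v p.2))‖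
      ≤ ∑ p ∈ S, ‖(c p * (∑ k ∈ Finset.range r, z p ^ k) -
        Complex.I / (τ : ℂ) * (((μ p.1 : ℂ) - (μ p.2 : ℂ))⁻¹ * c p * z p ^ r -
          ((μ p.1 : ℂ) - (μ p.2 : ℂ))⁻¹ * c p)) • vecMulVec (v p.1) (star (v p.2))‖ :=
        norm_sum_le _ _
    _ ≤ ∑ p ∈ S, (2 * ‖w p‖ * (K p * ‖δ‖)) * ‖vecMulVec (v p.1) (star (v p.2))‖ := by
        refine Finset.sum_le_sum fun p hp => ?_
        rw [norm_smul]
        exact mul_le_mul_of_nonneg_right (hcoeff p hp) (norm_nonneg _)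
    _ = (∑ p ∈ S, 2 * ‖w p‖ * ‖vecMulVec (v p.1) (star (v p.2))‖ * K p) * ‖δ‖ := by
        rw [Finset.sum_mul]
        exact Finset.sum_congr rfl fun p _ => by ring
    _ ≤ (1 + ∑ p ∈ S, 2 * ‖w p‖ * ‖vecMulVec (v p.1) (star (v p.2))‖ * K p) * ‖δ‖ := by
        apply mul_le_mul_of_nonneg_right _ (norm_nonneg _)
        linarith
end
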